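/- Let p be a prime and G = ℤ/p^{α_1}ℤ ⊕ ... ⊕ ℤ/p^{α_r}ℤ. Suppose n > Σ_{j=1}^r (p^{α_j} - 1), I ⊆ {1,...,n} with |I| > Σ_{j=1}^r (p^{α_j} - 1), and φ : {1,...,n} → G. Then there exists a proper subset I' ⊊ I with Σ_{i ∈ I'} φ(i) = Σ_{i ∈ I} φ(i). -/

import Mathlib

open Finset

noncomputable section

namespace DescentAux

variable {k : Type*} [CommRing k] {G : Type*} [AddCommMonoid G]

/-- `[g] - 1` in the group algebra. -/
def dd (k : Type*) [CommRing k] {G : Type*} [AddCommMonoid G] (g : G) :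
    AddMonoidAlgebra k G := AddMonoidAlgebra.single g 1 - 1

lemma dd_zero : dd k (0 : G) = 0 := by
  simp [dd, AddMonoidAlgebra.one_def]

lemma dd_add (g h : G) : dd k (g + h) = dd k g + dd k h + dd k g * dd k h := by
  have hs : (AddMonoidAlgebra.single g 1 : AddMonoidAlgebra k G) *
      AddMonoidAlgebra.single h 1 = AddMonoidAlgebra.single (g + h) 1 := by
    rw [AddMonoidAlgebra.single_mul_single, one_mul]
  simp only [dd]
  rw [← hs]; ring

lemma prod_mem_pow {R : Type*} [CommRing R] (J : Ideal R) {ι : Type*} (s : Finset ι)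
    (f : ι → R) (h : ∀ i ∈ s, f i ∈ J) : ∏ i ∈ s, f i ∈ J ^ s.card := by
  classical
  induction s using Finset.induction with
  | empty => simp
  | @insert a s hx ih =>
    rw [Finset.prod_insert hx, Finset.card_insert_of_notMem hx, pow_succ, mul_comm]
    exact Ideal.mul_mem_mul (h a (Finset.mem_insert_self a s))
      (ih fun i hi => h i (Finset.mem_insert_of_mem hi))

end DescentAux

namespace DescentAux2
open DescentAux

variable (p : ℕ) [Fact p.Prime] (r : ℕ) (α : Fin r → ℕ)

/-- The ideal generated by the `[e_j]-1`. -/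
def T : Ideal (AddMonoidAlgebra (ZMod p) (∀ j : Fin r, ZMod (p ^ α j))) :=
  Ideal.span (Set.range fun j : Fin r => dd (ZMod p) (Pi.single j (1 : ZMod (p ^ α j))))

lemma charP_R : CharP (AddMonoidAlgebra (ZMod p) (∀ j : Fin r, ZMod (p ^ α j))) p := by
  refine charP_of_injective_ringHom
    (f := AddMonoidAlgebra.singleZeroRingHom (R := ZMod p)
      (M := ∀ j : Fin r, ZMod (p ^ α j))) ?_ p
  intro a b hab
  simpa using (AddMonoidAlgebra.single_right_injective (m := 0) hab)

lemma t_nilpotent (j : Fin r) :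
    dd (ZMod p) (Pi.single j (1 : ZMod (p ^ α j)) : ∀ j : Fin r, ZMod (p ^ α j)) ^ p ^ α j
      = 0 := by
  haveI := charP_R p r α
  rw [dd, sub_pow_char_pow, one_pow, AddMonoidAlgebra.single_pow, one_pow]
  have : (p ^ α j) • (Pi.single j (1 : ZMod (p ^ α j)) : ∀ j : Fin r, ZMod (p ^ α j)) = 0 := by
    ext j'
    rcases eq_or_ne j' j with rfl | hne
    · simp [ZMod.natCast_self]
    · simp [Pi.single_eq_of_ne hne]
  rw [this]
  simp [AddMonoidAlgebra.one_def]

lemma dd_mem_T (g : ∀ j : Fin r, ZMod (p ^ α j)) : dd (ZMod p) g ∈ T p r α := by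
  haveI : ∀ j : Fin r, NeZero (p ^ α j) :=
    fun j => ⟨(pow_pos (Fact.out : p.Prime).pos _).ne'⟩
  have h0 : dd (ZMod p) (0 : ∀ j : Fin r, ZMod (p ^ α j)) ∈ T p r α := by
    rw [dd_zero]; exact zero_mem _
  have hadd : ∀ a b : ∀ j : Fin r, ZMod (p ^ α j), dd (ZMod p) a ∈ T p r α →
      dd (ZMod p) b ∈ T p r α → dd (ZMod p) (a + b) ∈ T p r α := by
    intro a b ha hb
    rw [dd_add]
    exact add_mem (add_mem ha hb) (Ideal.mul_mem_right _ _ ha)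
  have hsingle : ∀ (j : Fin r) (c : ZMod (p ^ α j)),
      dd (ZMod p) (Pi.single j c : ∀ j : Fin r, ZMod (p ^ α j)) ∈ T p r α := by
    intro j c
    have hbase : dd (ZMod p) (Pi.single j (1 : ZMod (p ^ α j)) : ∀ j : Fin r, ZMod (p ^ α j))
        ∈ T p r α := Ideal.subset_span ⟨j, rfl⟩
    have hn : ∀ m : ℕ,
        dd (ZMod p) (Pi.single j ((m : ZMod (p ^ α j))) : ∀ j : Fin r, ZMod (p ^ α j))
          ∈ T p r α := by
      intro m
      induction m with
      | zero => simpa using h0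
      | succ m ih =>
        have : (Pi.single j (((m + 1 : ℕ) : ZMod (p ^ α j))) : ∀ j : Fin r, ZMod (p ^ α j))
            = Pi.single j ((m : ZMod (p ^ α j))) + Pi.single j (1 : ZMod (p ^ α j)) := by
          rw [← Pi.single_add]; push_cast; ring_nf
        rw [this]
        exact hadd _ _ ih hbase
    have := hn c.val
    rwa [ZMod.natCast_zmod_val] at this
  have hsum : ∀ s : Finset (Fin r),
      dd (ZMod p) (∑ j ∈ s, Pi.single j (g j)) ∈ T p r α := by
    intro s
    classical
    induction s using Finset.induction with
    | empty => simpa using h0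
    | insert _ _ hx ih =>
      rw [Finset.sum_insert hx]
      exact hadd _ _ (hsingle _ _) ih
  have := hsum Finset.univ
  rwa [Finset.univ_sum_single] at this

lemma T_pow_eq_bot {m : ℕ} (hm : ∑ j, (p ^ α j - 1) < m) : (T p r α) ^ m = ⊥ := by
  classical
  rw [T]
  show Submodule.span _ _ ^ m = ⊥
  rw [Submodule.span_pow, Submodule.span_eq_bot]
  intro x hx
  rw [Set.mem_pow] at hx
  obtain ⟨f, hf⟩ := hx
  choose jj hjj using fun i => (f i).2
  have hx' : x = ∏ i : Fin m,
      dd (ZMod p) (Pi.single (jj i) (1 : ZMod (p ^ α (jj i)))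
        : ∀ j : Fin r, ZMod (p ^ α j)) := by
    rw [← hf, List.prod_ofFn]
    exact Finset.prod_congr rfl fun i _ => (hjj i).symm
  set c : Fin r → ℕ := fun j => (Finset.univ.filter fun i : Fin m => jj i = j).card with hc
  have hsum : ∑ j, c j = m := by
    have := Finset.card_eq_sum_card_fiberwise
      (f := jj) (s := Finset.univ) (t := Finset.univ) (fun x _ => Finset.mem_univ _)
    simpa [hc] using this.symm
  have hex : ∃ j₀, p ^ α j₀ ≤ c j₀ := by
    by_contra hcon
    push_neg at hcon
    have : ∑ j, c j ≤ ∑ j, (p ^ α j - 1) := by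
      refine Finset.sum_le_sum fun j _ => ?_
      have := hcon j
      omega
    omega
  obtain ⟨j₀, hj₀⟩ := hex
  rw [hx', ← Finset.prod_filter_mul_prod_filter_not Finset.univ (fun i => jj i = j₀)]
  have h1 : ∏ i ∈ Finset.univ.filter (fun i : Fin m => jj i = j₀),
      dd (ZMod p) (Pi.single (jj i) (1 : ZMod (p ^ α (jj i)))
        : ∀ j : Fin r, ZMod (p ^ α j))
      = dd (ZMod p) (Pi.single j₀ (1 : ZMod (p ^ α j₀))
        : ∀ j : Fin r, ZMod (p ^ α j)) ^ (c j₀) := by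
    rw [hc, ← Finset.prod_const]
    refine Finset.prod_congr rfl fun i hi => ?_
    have : jj i = j₀ := by simpa using hi
    subst this
    rfl
  rw [h1, pow_eq_zero_of_le hj₀ (t_nilpotent p r α j₀), zero_mul]

end DescentAux2

end

/-- Descent step: if `|I| > ∑ (p^{αⱼ}-1)` (and `n > ∑ (p^{αⱼ}-1)`), then for any
`φ : {1,…,n} → ℤ/p^{α₁}ℤ ⊕ ⋯ ⊕ ℤ/p^{α_r}ℤ` there is a proper subset `I' ⊊ I`
with the same `φ`-sum. -/
theorem descent_step (p : ℕ) (hp : p.Prime) (r : ℕ) (α : Fin r → ℕ)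
    (hα : ∀ j, 0 < α j) (n : ℕ) (hn : ∑ j, (p ^ α j - 1) < n)
    (I : Finset (Fin n)) (hI : ∑ j, (p ^ α j - 1) < I.card)
    (φ : Fin n → ∀ j, ZMod (p ^ α j)) :
    ∃ I' : Finset (Fin n), I' ⊂ I ∧ ∑ i ∈ I', φ i = ∑ i ∈ I, φ i := by
  classical
  haveI : Fact p.Prime := ⟨hp⟩
  haveI : Fact (1 < p) := ⟨hp.one_lt⟩
  -- Step 1: the product of the `[φ i] - 1` vanishes
  have key : (∏ i ∈ I, DescentAux.dd (ZMod p) (φ i)) = 0 := by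
    have hmem : ∏ i ∈ I, DescentAux.dd (ZMod p) (φ i) ∈ (DescentAux2.T p r α) ^ I.card :=
      DescentAux.prod_mem_pow _ _ _ fun i _ => DescentAux2.dd_mem_T p r α (φ i)
    rwa [DescentAux2.T_pow_eq_bot p r α hI, Ideal.mem_bot] at hmem
  -- Step 2: expand the product
  have expand : (∏ i ∈ I, DescentAux.dd (ZMod p) (φ i)) =
      ∑ t ∈ I.powerset, AddMonoidAlgebra.single (∑ i ∈ t, φ i)
        ((-1 : ZMod p) ^ (I \ t).card) := by
    have h1 : ∀ i : Fin n, DescentAux.dd (ZMod p) (φ i) =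
        AddMonoidAlgebra.single (φ i) (1 : ZMod p) +
          AddMonoidAlgebra.single (0 : ∀ j, ZMod (p ^ α j)) (-1 : ZMod p) := by
      intro i
      rw [DescentAux.dd, AddMonoidAlgebra.one_def, sub_eq_add_neg, ← AddMonoidAlgebra.single_neg]
    simp_rw [h1]
    rw [Finset.prod_add]
    refine Finset.sum_congr rfl fun t ht => ?_
    rw [AddMonoidAlgebra.prod_single, AddMonoidAlgebra.prod_single,
      AddMonoidAlgebra.single_mul_single]
    simp
  -- Step 3: evaluate the coefficient at `∑ i ∈ I, φ i`
  set s₀ : ∀ j, ZMod (p ^ α j) := ∑ i ∈ I, φ i with hs₀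
  by_contra hcon
  push_neg at hcon
  have h2 : (∑ t ∈ I.powerset, Finsupp.single (∑ i ∈ t, φ i)
      ((-1 : ZMod p) ^ (I \ t).card) : (∀ j, ZMod (p ^ α j)) →₀ ZMod p) = 0 :=
    by have := congrArg AddMonoidAlgebra.coeff (expand.symm.trans key); rwa [AddMonoidAlgebra.coeff_sum, AddMonoidAlgebra.coeff_zero] at this
  have hcoeff := congrArg (fun f : (∀ j, ZMod (p ^ α j)) →₀ ZMod p => f s₀) h2
  simp only [Finsupp.finset_sum_apply, Finsupp.coe_zero, Pi.zero_apply] at hcoeff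
  have hterm : ∀ t ∈ I.powerset, t ≠ I →
      (Finsupp.single (∑ i ∈ t, φ i)
        ((-1 : ZMod p) ^ (I \ t).card)) s₀ = 0 := by
    intro t ht hne
    have hsub : t ⊆ I := Finset.mem_powerset.1 ht
    have : ∑ i ∈ t, φ i ≠ s₀ := by
      intro hEq
      exact hcon t ⟨hsub, fun h => hne (Finset.Subset.antisymm hsub h)⟩ hEq
    rw [Finsupp.single_apply, if_neg this]
  rw [Finset.sum_eq_single_of_mem I (Finset.mem_powerset.2 (Finset.Subset.refl I)) hterm]
    at hcoeff
  rw [Finsupp.single_apply, if_pos rfl, Finset.sdiff_self, Finset.card_empty, pow_zero]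
    at hcoeff
  exact one_ne_zero hcoeff
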